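/- If q ∈ ℂ[a_1, …, a_n, y_1, …, y_m] is invariant under the W(B_n)-action and vanishes at every point of the affine hyperplane {(a, y) : a_1 = 1/2 − ν(y)}, then q is divisible by φ_ν := ∏_{i=1}^n (ν − 1/2 + a_i)(ν − 1/2 − a_i). In particular, φ_ν is, up to a nonzero scalar, the unique W(B_n)-invariant polynomial of minimal degree vanishing on that hyperplane. -/

import Mathlib

open MvPolynomial

/-- The action of a signed permutation (an element of the hyperoctahedral group `W(Bₙ)`)
on `ℂ[a₁, …, aₙ, y₁, …, y_m]`: it permutes the variables `a_i` and changes their signs,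
fixing the variables `y_j`.  Here `σ` is the permutation and `ε` the tuple of signs. -/
noncomputable def bAct {n m : ℕ} (σ : Equiv.Perm (Fin n)) (ε : Fin n → ℂ)
    (q : MvPolynomial (Fin n ⊕ Fin m) ℂ) : MvPolynomial (Fin n ⊕ Fin m) ℂ :=
  MvPolynomial.aeval
    (Sum.elim (fun i => MvPolynomial.C (ε i) * MvPolynomial.X (Sum.inl (σ i)))
      (fun j => MvPolynomial.X (Sum.inr j))) q

/-- A polynomial in `ℂ[a₁, …, aₙ, y₁, …, y_m]` is `W(Bₙ)`-invariant if it is fixed by all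
signed permutations of the `a`-variables. -/
def IsBnInvariant {n m : ℕ} (q : MvPolynomial (Fin n ⊕ Fin m) ℂ) : Prop :=
  ∀ σ : Equiv.Perm (Fin n), ∀ ε : Fin n → ℂ, (∀ i, ε i = 1 ∨ ε i = -1) → bAct σ ε q = q

/-- `φ_ν := ∏_{i=1}^n (ν − 1/2 + a_i)(ν − 1/2 − a_i)`. -/
noncomputable def phiNu {n m : ℕ} (ν : MvPolynomial (Fin m) ℂ) :
    MvPolynomial (Fin n ⊕ Fin m) ℂ :=
  ∏ i : Fin n,
    ((MvPolynomial.rename Sum.inr ν - MvPolynomial.C (1/2) + MvPolynomial.X (Sum.inl i)) *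
      (MvPolynomial.rename Sum.inr ν - MvPolynomial.C (1/2) - MvPolynomial.X (Sum.inl i)))

/-- `q` vanishes on the affine hyperplane `{(a, y) : a₁ = 1/2 − ν(y)}`. -/
def VanishesOnHyperplane {n m : ℕ} (hn : 1 ≤ n) (ν : MvPolynomial (Fin m) ℂ)
    (q : MvPolynomial (Fin n ⊕ Fin m) ℂ) : Prop :=
  ∀ (a : Fin n → ℂ) (y : Fin m → ℂ), a ⟨0, hn⟩ = 1/2 - MvPolynomial.eval y ν →
    MvPolynomial.eval (Sum.elim a y) q = 0

/-! ### Auxiliary degree theory: `totalDegree` is additive on products over a domain -/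

section DegreeTheory

variable {σ : Type*}

lemma homComp_monomial (k : ℕ) (d : σ →₀ ℕ) (a : ℂ) :
    homogeneousComponent k (monomial d a)
      = if d.degree = k then monomial d a else 0 := by
  classical
  ext e
  rw [coeff_homogeneousComponent]
  by_cases h : e = d
  · subst h; split_ifs <;> simp
  · have h0 : (if d = e then a else 0) = 0 := if_neg (fun hh => h hh.symm)
    split_ifs <;> simp [coeff_monomial, h0]

lemma coeff_psi (x : σ → ℂ) (p : MvPolynomial σ ℂ) (k : ℕ) :
    (aeval (fun s => Polynomial.C (x s) * Polynomial.X) p).coeff k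
      = eval x (homogeneousComponent k p) := by
  induction p using MvPolynomial.induction_on' with
  | add p q hp hq => rw [map_add, map_add, Polynomial.coeff_add, map_add, hp, hq]
  | monomial d a =>
    rw [aeval_monomial]
    have h1 : (d.prod fun s e => (Polynomial.C (x s) * Polynomial.X)^e)
        = Polynomial.C (d.prod fun s e => x s ^ e) * Polynomial.X ^ d.degree := by
      rw [Finsupp.prod, Finsupp.degree]
      simp_rw [mul_pow, ← Polynomial.C_pow]
      rw [Finset.prod_mul_distrib, ← map_prod, Finset.prod_pow_eq_pow_sum]
      rfl
    rw [h1, homComp_monomial]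
    have h2 : (algebraMap ℂ (Polynomial ℂ)) a = Polynomial.C a := rfl
    rw [h2, ← mul_assoc, ← map_mul, Polynomial.coeff_C_mul, Polynomial.coeff_X_pow]
    split_ifs with h1' h2' h3'
    · rw [eval_monomial, mul_one]
    · exact absurd h1'.symm h2'
    · exact absurd h3'.symm h1'
    · simp

lemma natDegree_psi_le (x : σ → ℂ) (p : MvPolynomial σ ℂ) :
    (aeval (fun s => Polynomial.C (x s) * Polynomial.X) p).natDegree ≤ p.totalDegree := by
  apply Polynomial.natDegree_le_iff_coeff_eq_zero.mpr
  intro k hk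
  rw [coeff_psi, homogeneousComponent_eq_zero k p hk, map_zero]

lemma homComp_totalDegree_ne_zero {p : MvPolynomial σ ℂ} (hp : p ≠ 0) :
    homogeneousComponent p.totalDegree p ≠ 0 := by
  obtain ⟨d, hd, hdeg⟩ := Finset.exists_mem_eq_sup p.support
    (support_nonempty.mpr hp) (fun s => s.sum fun _ e => e)
  intro h0
  have : coeff d (homogeneousComponent p.totalDegree p) = coeff d p := by
    rw [coeff_homogeneousComponent, if_pos]
    rw [Finsupp.degree, totalDegree, hdeg, Finsupp.sum]
    rfl
  rw [h0, coeff_zero] at this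
  exact (mem_support_iff.mp hd) this.symm

lemma totalDegree_mul_eq {p q : MvPolynomial σ ℂ} (hp : p ≠ 0) (hq : q ≠ 0) :
    (p * q).totalDegree = p.totalDegree + q.totalDegree := by
  apply le_antisymm (totalDegree_mul p q)
  have hne : homogeneousComponent p.totalDegree p * homogeneousComponent q.totalDegree q ≠ 0 :=
    mul_ne_zero (homComp_totalDegree_ne_zero hp) (homComp_totalDegree_ne_zero hq)
  have hx : ∃ x : σ → ℂ, eval x (homogeneousComponent p.totalDegree p *
      homogeneousComponent q.totalDegree q) ≠ 0 := by
    by_contra h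
    push_neg at h
    exact hne (MvPolynomial.funext fun x => by rw [h x, map_zero])
  obtain ⟨x, hx⟩ := hx
  rw [map_mul] at hx
  set P := aeval (fun s => Polynomial.C (x s) * Polynomial.X) p with hP
  set Q := aeval (fun s => Polynomial.C (x s) * Polynomial.X) q with hQ
  have hPc : P.coeff p.totalDegree ≠ 0 := by rw [hP, coeff_psi]; exact left_ne_zero_of_mul hx
  have hQc : Q.coeff q.totalDegree ≠ 0 := by rw [hQ, coeff_psi]; exact right_ne_zero_of_mul hx
  have hPdeg : P.natDegree = p.totalDegree :=
    le_antisymm (natDegree_psi_le x p) (Polynomial.le_natDegree_of_ne_zero hPc)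
  have hQdeg : Q.natDegree = q.totalDegree :=
    le_antisymm (natDegree_psi_le x q) (Polynomial.le_natDegree_of_ne_zero hQc)
  have hPne : P ≠ 0 := fun h => hPc (by rw [h, Polynomial.coeff_zero])
  have hQne : Q ≠ 0 := fun h => hQc (by rw [h, Polynomial.coeff_zero])
  calc p.totalDegree + q.totalDegree = (P * Q).natDegree := by
        rw [Polynomial.natDegree_mul hPne hQne, hPdeg, hQdeg]
    _ ≤ (p * q).totalDegree := by rw [hP, hQ, ← map_mul]; exact natDegree_psi_le x _

lemma eq_C_of_totalDegree_eq_zero {r : MvPolynomial σ ℂ} (h : r.totalDegree = 0) :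
    r = C (coeff 0 r) := by
  classical
  have hs := (totalDegree_eq_zero_iff σ r).mp h
  ext d
  rw [coeff_C]
  by_cases hd : (0 : σ →₀ ℕ) = d
  · subst hd; rw [if_pos rfl]
  · rw [if_neg hd]
    by_contra hc
    have hmem : d ∈ r.support := mem_support_iff.mpr hc
    apply hd
    ext s
    rw [Finsupp.coe_zero, Pi.zero_apply, (hs d hmem s)]

end DegreeTheory

/-! ### The substitution homomorphism killing `X (inl i) - rename inr c` -/

section Substitution

variable {n m : ℕ}

/-- Substitution `X (inl i) ↦ rename inr c`, all other variables fixed. -/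
noncomputable def PhiSub (c : MvPolynomial (Fin m) ℂ) (i : Fin n) :
    MvPolynomial (Fin n ⊕ Fin m) ℂ →ₐ[ℂ] MvPolynomial (Fin n ⊕ Fin m) ℂ :=
  aeval (fun s => if s = Sum.inl i then rename Sum.inr c else X s)

/-- The linear polynomial `X (inl i) - c(y)`. -/
noncomputable def dPoly (c : MvPolynomial (Fin m) ℂ) (i : Fin n) :
    MvPolynomial (Fin n ⊕ Fin m) ℂ :=
  X (Sum.inl i) - rename Sum.inr c

variable (c c' : MvPolynomial (Fin m) ℂ) (i : Fin n)

lemma PhiSub_rename : PhiSub (n := n) c i (rename Sum.inr c') = rename Sum.inr c' := by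
  rw [PhiSub, aeval_rename]
  have : ((fun s => if s = Sum.inl i then rename (Sum.inr : Fin m → Fin n ⊕ Fin m) c else X s)
      ∘ Sum.inr) = (X ∘ Sum.inr : Fin m → MvPolynomial (Fin n ⊕ Fin m) ℂ) := by
    funext j; simp [Function.comp]
  rw [this]
  exact (DFunLike.congr_fun (rename_eq_aeval (R := ℂ) (Sum.inr : Fin m → Fin n ⊕ Fin m)) c').symm

lemma PhiSub_X_inl : PhiSub c i (X (Sum.inl i)) = rename Sum.inr c := by
  simp [PhiSub]

lemma PhiSub_X_ne {s : Fin n ⊕ Fin m} (h : s ≠ Sum.inl i) : PhiSub c i (X s) = X s := by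
  simp [PhiSub, h]

lemma dPoly_dvd_sub_PhiSub (q : MvPolynomial (Fin n ⊕ Fin m) ℂ) :
    dPoly c i ∣ q - PhiSub c i q := by
  induction q using MvPolynomial.induction_on with
  | C a => simp [PhiSub]
  | add p q hp hq =>
    have : p + q - PhiSub c i (p + q) = (p - PhiSub c i p) + (q - PhiSub c i q) := by
      rw [map_add]; ring
    rw [this]; exact dvd_add hp hq
  | mul_X p s hp =>
    have key : p * X s - PhiSub c i (p * X s)
        = p * (X s - PhiSub c i (X s)) + PhiSub c i (X s) * (p - PhiSub c i p) := by
      rw [map_mul]; ring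
    rw [key]
    apply dvd_add
    · apply Dvd.dvd.mul_left
      by_cases h : s = Sum.inl i
      · subst h; rw [PhiSub_X_inl]; rfl
      · rw [PhiSub_X_ne c i h, sub_self]; exact dvd_zero _
    · exact (hp).mul_left _

lemma PhiSub_dPoly : PhiSub c i (dPoly c i) = 0 := by
  rw [dPoly, map_sub, PhiSub_X_inl, PhiSub_rename, sub_self]

lemma dPoly_dvd_iff (q : MvPolynomial (Fin n ⊕ Fin m) ℂ) :
    dPoly c i ∣ q ↔ PhiSub c i q = 0 := by
  constructor
  · rintro ⟨r, rfl⟩; rw [map_mul, PhiSub_dPoly, zero_mul]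
  · intro h
    have := dPoly_dvd_sub_PhiSub c i q
    rwa [h, sub_zero] at this

lemma rename_add_CX_ne_zero (w : MvPolynomial (Fin m) ℂ) (j : Fin n) (e : ℂ) (he : e ≠ 0) :
    (rename Sum.inr w + C e * X (Sum.inl j) : MvPolynomial (Fin n ⊕ Fin m) ℂ) ≠ 0 := by
  intro h
  set w0 : ℂ := constantCoeff w with hw0
  have := congrArg (eval (Sum.elim (fun _ => (1 - w0)/e) (fun _ => (0:ℂ)))) h
  simp [eval_rename, Function.comp] at this
  rw [mul_div_cancel₀ _ he, ← hw0] at this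
  simp at this

lemma dPoly_ne_zero : dPoly c i ≠ 0 := by
  have h := rename_add_CX_ne_zero (n := n) c i (-1) (by norm_num)
  intro h0
  apply h
  rw [← neg_eq_zero] at h0
  rw [← h0, dPoly, C_neg, C_1]
  ring

lemma dPoly_prime : Prime (dPoly c i) := by
  refine ⟨dPoly_ne_zero c i, ?_, ?_⟩
  · intro hu
    have := hu.map (PhiSub c i)
    rw [PhiSub_dPoly] at this
    exact not_isUnit_zero this
  · intro a b h
    rw [dPoly_dvd_iff] at h
    rw [map_mul] at h
    rcases mul_eq_zero.mp h with h' | h'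
    · left; rw [dPoly_dvd_iff]; exact h'
    · right; rw [dPoly_dvd_iff]; exact h'

end Substitution

/-! ### Products of pairwise non-dividing primes -/

lemma prod_primes_dvd' {α : Type*} [CommMonoidWithZero α] [IsCancelMulZero α] {ι : Type*} [DecidableEq ι]
    (s : Finset ι) (p : ι → α) (q : α)
    (hprime : ∀ i ∈ s, Prime (p i))
    (hnd : ∀ i ∈ s, ∀ j ∈ s, i ≠ j → ¬ p i ∣ p j)
    (hdvd : ∀ i ∈ s, p i ∣ q) :
    ∏ i ∈ s, p i ∣ q := by
  induction s using Finset.induction generalizing q with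
  | empty => simp
  | @insert a s ha ih =>
    obtain ⟨r, rfl⟩ := hdvd a (Finset.mem_insert_self a s)
    rw [Finset.prod_insert ha]
    apply mul_dvd_mul_left
    apply ih
    · exact fun i hi => hprime i (Finset.mem_insert_of_mem hi)
    · exact fun i hi j hj hij =>
        hnd i (Finset.mem_insert_of_mem hi) j (Finset.mem_insert_of_mem hj) hij
    · intro i hi
      have hne : i ≠ a := fun h => ha (h ▸ hi)
      have h1 : p i ∣ p a * r := hdvd i (Finset.mem_insert_of_mem hi)
      rcases (hprime i (Finset.mem_insert_of_mem hi)).2.2 _ _ h1 with h | h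
      · exact absurd h (hnd i (Finset.mem_insert_of_mem hi) a (Finset.mem_insert_self a s) hne)
      · exact h

/-! ### Main arguments -/

section Main

variable {n m : ℕ}

lemma rename_mu (ν : MvPolynomial (Fin m) ℂ) :
    rename (Sum.inr : Fin m → Fin n ⊕ Fin m) (ν - C (1/2))
      = rename Sum.inr ν - C (1/2) := by
  rw [map_sub, rename_C]

lemma rename_nu' (ν : MvPolynomial (Fin m) ℂ) :
    rename (Sum.inr : Fin m → Fin n ⊕ Fin m) (C (1/2) - ν)
      = C (1/2) - rename Sum.inr ν := by
  rw [map_sub, rename_C]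

/-- If `q` vanishes on the hyperplane, the substitution `a₁ ↦ 1/2 - ν` kills `q`. -/
lemma PhiSub_eq_zero_of_vanishes (hn : 1 ≤ n) (ν : MvPolynomial (Fin m) ℂ)
    (q : MvPolynomial (Fin n ⊕ Fin m) ℂ) (hvan : VanishesOnHyperplane hn ν q) :
    PhiSub (C (1/2) - ν) (⟨0, hn⟩ : Fin n) q = 0 := by
  apply MvPolynomial.funext
  intro x
  rw [map_zero]
  rw [PhiSub, aeval_def, algebraMap_eq, ← eval_assoc]
  set i₀ : Fin n := ⟨0, hn⟩
  set y : Fin m → ℂ := x ∘ Sum.inr with hy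
  set a : Fin n → ℂ := fun k => if k = i₀ then 1/2 - eval y ν else x (Sum.inl k) with ha
  have hcomp : (eval x ∘ fun s =>
      if s = Sum.inl i₀ then rename (Sum.inr : Fin m → Fin n ⊕ Fin m) (C (1/2) - ν) else X s)
      = Sum.elim a y := by
    funext s
    cases s with
    | inl k =>
      simp only [Function.comp_apply, Sum.elim_inl, ha]
      by_cases hk : k = i₀
      · subst hk
        rw [if_pos rfl, if_pos rfl, eval_rename]
        simp [hy]
      · rw [if_neg (by simp [hk]), if_neg hk, eval_X]
    | inr j =>
      simp only [Function.comp_apply, Sum.elim_inr]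
      rw [if_neg (by simp), eval_X]
      rfl
  rw [hcomp]
  apply hvan
  rw [ha]
  simp [i₀]

/-- `bAct` fixes polynomials coming from the `y`-variables. -/
lemma bAct_rename (τ : Equiv.Perm (Fin n)) (δ : Fin n → ℂ) (w : MvPolynomial (Fin m) ℂ) :
    bAct τ δ (rename Sum.inr w) = rename Sum.inr w := by
  rw [bAct, aeval_rename, Sum.elim_comp_inr]
  exact (DFunLike.congr_fun (rename_eq_aeval (R := ℂ) (Sum.inr : Fin m → Fin n ⊕ Fin m)) w).symm

lemma phi_factors_dvd (hn : 1 ≤ n) (ν : MvPolynomial (Fin m) ℂ)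
    (q : MvPolynomial (Fin n ⊕ Fin m) ℂ)
    (hinv : IsBnInvariant q) (hvan : VanishesOnHyperplane hn ν q) (i : Fin n) (e : ℂ)
    (he : e = 1 ∨ e = -1) :
    (rename Sum.inr ν - C (1/2) + C e * X (Sum.inl i) : MvPolynomial (Fin n ⊕ Fin m) ℂ) ∣ q := by
  set i₀ : Fin n := ⟨0, hn⟩
  have h0 : dPoly (C (1/2) - ν) i₀ ∣ q := by
    rw [dPoly_dvd_iff]
    exact PhiSub_eq_zero_of_vanishes hn ν q hvan
  obtain ⟨r, hr⟩ := h0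
  set τ : Equiv.Perm (Fin n) := Equiv.swap i₀ i with hτ
  set δ : Fin n → ℂ := fun _ => e with hδ
  have hsign : ∀ k, δ k = 1 ∨ δ k = -1 := fun k => he
  have hq : bAct τ δ q = q := hinv τ δ hsign
  have hd : bAct τ δ (dPoly (C (1/2) - ν) i₀)
      = rename Sum.inr ν - C (1/2) + C e * X (Sum.inl i) := by
    rw [dPoly, rename_nu', bAct, map_sub, map_sub, aeval_X, Sum.elim_inl]
    have hC : (aeval (Sum.elim (fun k => C (δ k) * X (Sum.inl (τ k)))
        (fun j => (X (Sum.inr j) : MvPolynomial (Fin n ⊕ Fin m) ℂ))))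
        (C (1/2) : MvPolynomial (Fin n ⊕ Fin m) ℂ) = C (1/2) := by
      rw [aeval_C]; rfl
    have hrn := bAct_rename τ δ ν
    rw [bAct] at hrn
    rw [hC, hrn, hδ, hτ]
    simp only [Equiv.swap_apply_left]
    ring
  calc (rename Sum.inr ν - C (1/2) + C e * X (Sum.inl i) : MvPolynomial (Fin n ⊕ Fin m) ℂ)
      = bAct τ δ (dPoly (C (1/2) - ν) i₀) := hd.symm
    _ ∣ bAct τ δ q := by
        rw [hr]
        exact ⟨bAct τ δ r, by simp only [bAct]; rw [map_mul]⟩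
    _ = q := hq

/-- The factor `ν - 1/2 + e·aᵢ` (with `e = ±1`) is prime. -/
lemma factor_prime (ν : MvPolynomial (Fin m) ℂ) (i : Fin n) (e : ℂ) (he : e = 1 ∨ e = -1) :
    Prime (rename Sum.inr ν - C (1/2) + C e * X (Sum.inl i) :
      MvPolynomial (Fin n ⊕ Fin m) ℂ) := by
  rcases he with he | he
  · subst he
    have : (rename Sum.inr ν - C (1/2) + C 1 * X (Sum.inl i) :
        MvPolynomial (Fin n ⊕ Fin m) ℂ) = dPoly (C (1/2) - ν) i := by
      rw [dPoly, rename_nu', C_1]; ring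
    rw [this]
    exact dPoly_prime _ i
  · subst he
    have : (rename Sum.inr ν - C (1/2) + C (-1) * X (Sum.inl i) :
        MvPolynomial (Fin n ⊕ Fin m) ℂ) = -(dPoly (ν - C (1/2)) i) := by
      rw [dPoly, rename_mu, C_neg, C_1]; ring
    rw [this]
    exact (dPoly_prime _ i).neg

lemma PhiSub_factor (c : MvPolynomial (Fin m) ℂ) (ν : MvPolynomial (Fin m) ℂ)
    (i j : Fin n) (e : ℂ) (hij : j ≠ i) :
    PhiSub c i (rename Sum.inr ν - C (1/2) + C e * X (Sum.inl j))
      = rename Sum.inr ν - C (1/2) + C e * X (Sum.inl j) := by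
  rw [← rename_mu, map_add, map_mul, PhiSub_rename]
  have hX : PhiSub c i (X (Sum.inl j)) = X (Sum.inl j) :=
    PhiSub_X_ne c i (by simp [hij])
  have hC : PhiSub c i (C e : MvPolynomial (Fin n ⊕ Fin m) ℂ) = C e := by
    rw [PhiSub]; rw [aeval_C]; rfl
  rw [hX, hC]

lemma PhiSub_factor_self (c : MvPolynomial (Fin m) ℂ) (ν : MvPolynomial (Fin m) ℂ)
    (i : Fin n) (e : ℂ) :
    PhiSub c i (rename Sum.inr ν - C (1/2) + C e * X (Sum.inl i))
      = rename Sum.inr ((ν - C (1/2)) + C e * c) := by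
  rw [← rename_mu, map_add, map_mul, PhiSub_rename, PhiSub_X_inl]
  have hC : PhiSub c i (C e : MvPolynomial (Fin n ⊕ Fin m) ℂ) = C e := by
    rw [PhiSub]; rw [aeval_C]; rfl
  rw [hC, map_add, map_mul, rename_C]

set_option maxHeartbeats 1000000 in
/-- Key divisibility: `φ_ν ∣ q`. -/
lemma phiNu_dvd (hn : 1 ≤ n) (ν : MvPolynomial (Fin m) ℂ)
    (hν : ν ≠ MvPolynomial.C (1/2))
    (q : MvPolynomial (Fin n ⊕ Fin m) ℂ)
    (hinv : IsBnInvariant q) (hvan : VanishesOnHyperplane hn ν q) :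
    phiNu ν ∣ q := by
  classical
  set u : MvPolynomial (Fin n ⊕ Fin m) ℂ := rename Sum.inr ν - C (1/2) with hu
  set p : Fin n × Bool → MvPolynomial (Fin n ⊕ Fin m) ℂ :=
    fun ib => u + C (if ib.2 then (1:ℂ) else -1) * X (Sum.inl ib.1) with hp
  have hsign : ∀ ib : Fin n × Bool, (if ib.2 then (1:ℂ) else -1) = 1 ∨
      (if ib.2 then (1:ℂ) else -1) = -1 := by
    intro ib; by_cases h : ib.2 <;> simp [h]
  have hprime : ∀ ib : Fin n × Bool, Prime (p ib) := fun ib =>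
    factor_prime ν ib.1 _ (hsign ib)
  have hdvd : ∀ ib : Fin n × Bool, p ib ∣ q := fun ib =>
    phi_factors_dvd hn ν q hinv hvan ib.1 _ (hsign ib)
  have hmu_ne : (ν - C (1/2) : MvPolynomial (Fin m) ℂ) ≠ 0 := sub_ne_zero.mpr hν
  have hnd : ∀ ib jb : Fin n × Bool, ib ≠ jb → ¬ p ib ∣ p jb := by
    rintro ⟨i, b⟩ ⟨j, b'⟩ hne hdvd'
    set e : ℂ := if b then (1:ℂ) else -1 with he
    set e' : ℂ := if b' then (1:ℂ) else -1 with he'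
    have he'e : e' ≠ 0 := by rcases Bool.eq_false_or_eq_true b' with h | h <;> simp [he', h]
    have he2 : e * e = 1 := by rcases Bool.eq_false_or_eq_true b with h | h <;> simp [he, h]
    set c : MvPolynomial (Fin m) ℂ := C e * (C (1/2) - ν) with hc
    have hrc : rename (Sum.inr : Fin m → Fin n ⊕ Fin m) c
        = C e * (C (1/2) - rename Sum.inr ν) := by
      rw [hc, map_mul, rename_C, rename_nu']
    have hCe2 : (C e * C e : MvPolynomial (Fin n ⊕ Fin m) ℂ) = 1 := by
      rw [← C_mul, he2, C_1]
    have hfac : p (i, b) = C e * dPoly c i := by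
      rw [hp, dPoly, hrc, hu]
      linear_combination (C (1/2:ℂ) - rename (Sum.inr : Fin m → Fin n ⊕ Fin m) ν) * hCe2
    have hdp : dPoly c i ∣ p (j, b') := by
      refine dvd_trans ⟨C e, by rw [hfac]; ring⟩ hdvd'
    rw [dPoly_dvd_iff] at hdp
    by_cases hij : j = i
    · subst hij
      have hbb : b ≠ b' := fun h => hne (by rw [h])
      have hee'' : e' * e = -1 := by
        rcases Bool.eq_false_or_eq_true b with h1 | h1 <;>
          rcases Bool.eq_false_or_eq_true b' with h2 | h2 <;>
          simp_all [he, he']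
      rw [hp, PhiSub_factor_self] at hdp
      have hz : ((ν - C (1/2)) + C e' * c : MvPolynomial (Fin m) ℂ) = 0 := by
        have hinj := rename_injective (R := ℂ) (Sum.inr : Fin m → Fin n ⊕ Fin m)
          Sum.inr_injective
        apply hinj
        rw [hdp, map_zero]
      rw [hc, ← mul_assoc, ← C_mul, hee'', C_neg, C_1] at hz
      have h2ν : (2 : MvPolynomial (Fin m) ℂ) * (ν - C (1/2)) = 0 := by
        linear_combination hz
      exact (mul_ne_zero two_ne_zero hmu_ne) h2ν
    · exact absurd hdp (by
        rw [hp, PhiSub_factor c ν i j _ hij]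
        intro h0
        apply rename_add_CX_ne_zero (ν - C (1/2)) j e' he'e
        rw [← h0, rename_mu])
  have hprod : ∏ ib : Fin n × Bool, p ib = phiNu ν := by
    rw [Fintype.prod_prod_type (fun x => p x), phiNu]
    apply Finset.prod_congr rfl
    intro i _
    rw [Fintype.prod_bool (fun b => p (i, b))]
    have h1 : p (i, true) = u + C 1 * X (Sum.inl i) := rfl
    have h2 : p (i, false) = u + C (-1) * X (Sum.inl i) := rfl
    rw [h1, h2, hu, C_1, C_neg, C_1]
    ring
  rw [← hprod]
  exact prod_primes_dvd' Finset.univ p q (fun ib _ => hprime ib)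
    (fun ib _ jb _ h => hnd ib jb h) (fun ib _ => hdvd ib)

lemma phiNu_invariant (ν : MvPolynomial (Fin m) ℂ) : IsBnInvariant (phiNu (n := n) ν) := by
  intro σ ε hε
  set u : MvPolynomial (Fin n ⊕ Fin m) ℂ := rename Sum.inr ν - C (1/2) with hu
  have hfac : phiNu (n := n) ν = ∏ i : Fin n, (u^2 - X (Sum.inl i)^2) := by
    rw [phiNu]
    apply Finset.prod_congr rfl
    intro i _
    rw [hu]; ring
  rw [hfac, bAct, map_prod]
  have hud : aeval (Sum.elim (fun i => C (ε i) * X (Sum.inl (σ i)))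
      (fun j => (X (Sum.inr j) : MvPolynomial (Fin n ⊕ Fin m) ℂ))) u = u := by
    have h1 := bAct_rename σ ε ν
    rw [bAct] at h1
    rw [hu, map_sub, h1, aeval_C]
    rfl
  have hptwise : ∀ i : Fin n, aeval (Sum.elim (fun i => C (ε i) * X (Sum.inl (σ i)))
      (fun j => (X (Sum.inr j) : MvPolynomial (Fin n ⊕ Fin m) ℂ)))
      (u^2 - X (Sum.inl i)^2) = u^2 - X (Sum.inl (σ i))^2 := by
    intro i
    rw [map_sub, map_pow, map_pow, aeval_X, Sum.elim_inl, hud]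
    have hsq : (ε i)^2 = 1 := by rcases hε i with h | h <;> rw [h] <;> norm_num
    rw [mul_pow, ← C_pow, hsq, C_1, one_mul]
  rw [Finset.prod_congr rfl (fun i _ => hptwise i),
    Equiv.prod_comp σ (fun i => u^2 - X (Sum.inl i)^2), ← hfac]

lemma phiNu_vanishes (hn : 1 ≤ n) (ν : MvPolynomial (Fin m) ℂ) :
    VanishesOnHyperplane hn ν (phiNu (n := n) ν) := by
  intro a y hay
  rw [phiNu, map_prod]
  apply Finset.prod_eq_zero (Finset.mem_univ (⟨0, hn⟩ : Fin n))
  rw [map_mul]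
  have h0 : eval (Sum.elim a y)
      (rename Sum.inr ν - C (1/2) + X (Sum.inl (⟨0, hn⟩ : Fin n))) = 0 := by
    rw [map_add, map_sub, eval_rename, Sum.elim_comp_inr, eval_C, eval_X, Sum.elim_inl, hay]
    ring
  rw [h0, zero_mul]

lemma phiNu_ne_zero (ν : MvPolynomial (Fin m) ℂ) : phiNu (n := n) ν ≠ 0 := by
  rw [phiNu]
  apply Finset.prod_ne_zero_iff.mpr
  intro i _
  apply mul_ne_zero
  · have h := (factor_prime ν i 1 (Or.inl rfl)).ne_zero
    rwa [C_1, one_mul] at h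
  · have h := (factor_prime ν i (-1) (Or.inr rfl)).ne_zero
    intro h0
    apply h
    rw [← h0, C_neg, C_1]
    ring

end Main

/-- let `ν ∈ ℂ[y₁,…,y_m]` have degree at most `1` and `ν ≠ 1/2`.  If
`q ∈ ℂ[a₁,…,aₙ,y₁,…,y_m]` is `W(Bₙ)`-invariant and vanishes on the affine hyperplane
`{a₁ = 1/2 − ν(y)}`, then `φ_ν ∣ q`.  In particular `φ_ν` is, up to a nonzero scalar, the
unique `W(Bₙ)`-invariant polynomial of minimal degree vanishing on that hyperplane. -/
theorem statement13 (n m : ℕ) (hn : 1 ≤ n)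
    (ν : MvPolynomial (Fin m) ℂ) (hdeg : ν.totalDegree ≤ 1)
    (hν : ν ≠ MvPolynomial.C (1/2))
    (q : MvPolynomial (Fin n ⊕ Fin m) ℂ)
    (hinv : IsBnInvariant q) (hvan : VanishesOnHyperplane hn ν q) :
    (phiNu ν ∣ q) ∧
    IsBnInvariant (phiNu (n := n) ν) ∧ VanishesOnHyperplane hn ν (phiNu ν) ∧
    (∀ q' : MvPolynomial (Fin n ⊕ Fin m) ℂ, IsBnInvariant q' →
      VanishesOnHyperplane hn ν q' → q' ≠ 0 →
      q'.totalDegree ≤ (phiNu (n := n) ν).totalDegree →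
      ∃ c : ℂ, c ≠ 0 ∧ q' = MvPolynomial.C c * phiNu ν) := by
  refine ⟨phiNu_dvd hn ν hν q hinv hvan, phiNu_invariant ν, phiNu_vanishes hn ν, ?_⟩
  intro q' hinv' hvan' hne' hdeg'
  obtain ⟨r, hr⟩ := phiNu_dvd hn ν hν q' hinv' hvan'
  have hφ : phiNu (n := n) ν ≠ 0 := phiNu_ne_zero ν
  have hrne : r ≠ 0 := fun h => hne' (by rw [hr, h, mul_zero])
  have hdeg2 : (phiNu (n := n) ν).totalDegree + r.totalDegree ≤ (phiNu (n := n) ν).totalDegree := by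
    rw [← totalDegree_mul_eq hφ hrne, ← hr]
    exact hdeg'
  have hr0 : r.totalDegree = 0 := by omega
  have hrC := eq_C_of_totalDegree_eq_zero hr0
  refine ⟨coeff 0 r, fun h => hrne (by rw [hrC, h, C_0]), ?_⟩
  rw [hr, mul_comm, ← hrC]
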